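/- For gradient descent w_{t+1} = w_t − η∇g(w_t) on an L-Lipschitz, q-quasar-convex function g with minimizer w* and ‖w₁ − w*‖ ≤ D, the average suboptimality over T steps satisfies (1/T)·Σ_{t=1}^{T} (g(w_t) − g(w*)) ≤ D²/(2ηqT) + ηL²/(2q). -/

import Mathlib

open RealInnerProductSpace

/-- Gradient descent `w_{t+1} = w_t − η∇g(w_t)` on an `L`-Lipschitz, `q`-quasar-convex
function `g` with minimizer `w*` and `‖w₁ − w*‖ ≤ D` satisfies
`(1/T)·Σ_{t=1}^{T} (g(w_t) − g(w*)) ≤ D²/(2ηqT) + ηL²/(2q)`. -/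
theorem stmt_5 {d : ℕ} (g : EuclideanSpace ℝ (Fin d) → ℝ)
    (g' : EuclideanSpace ℝ (Fin d) → EuclideanSpace ℝ (Fin d))
    (hgrad : ∀ w, HasGradientAt g (g' w) w)
    (L : ℝ) (hL : 0 ≤ L) (hLip : ∀ w, ‖g' w‖ ≤ L)
    (q : ℝ) (hq0 : 0 < q) (hq1 : q ≤ 1)
    (wstar : EuclideanSpace ℝ (Fin d)) (hmin : ∀ w, g wstar ≤ g w)
    (hquasar : ∀ w, g w + (1 / q) * ⟪g' w, wstar - w⟫ ≤ g wstar)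
    (η : ℝ) (hη : 0 < η) (T : ℕ) (hT : 1 ≤ T)
    (D : ℝ) (hD : 0 ≤ D)
    (w : ℕ → EuclideanSpace ℝ (Fin d))
    (hinit : ‖w 1 - wstar‖ ≤ D)
    (hupdate : ∀ t, w (t + 1) = w t - η • g' (w t)) :
    (1 / (T : ℝ)) * ∑ t ∈ Finset.Icc 1 T, (g (w t) - g wstar) ≤
      D ^ 2 / (2 * η * q * T) + η * L ^ 2 / (2 * q) := by
  set r : ℕ → ℝ := fun t => ‖w t - wstar‖ ^ 2 with hr
  have hstep : ∀ t, q * (g (w t) - g wstar) ≤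
      (r t - r (t + 1)) / (2 * η) + η * L ^ 2 / 2 := by
    intro t
    have hq : ⟪g' (w t), w t - wstar⟫ ≥ q * (g (w t) - g wstar) := by
      have h := hquasar (w t)
      have hinner : ⟪g' (w t), wstar - w t⟫ = -⟪g' (w t), w t - wstar⟫ := by
        rw [← inner_neg_right]; congr 1; abel
      rw [hinner] at h
      have : (1 / q) * ⟪g' (w t), w t - wstar⟫ ≥ g (w t) - g wstar := by linarith
      calc ⟪g' (w t), w t - wstar⟫ = q * ((1/q) * ⟪g' (w t), w t - wstar⟫) := by
            field_simp
        _ ≥ q * (g (w t) - g wstar) := by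
            apply mul_le_mul_of_nonneg_left this hq0.le
    have hnorm : r (t + 1) = r t - 2 * η * ⟪g' (w t), w t - wstar⟫ + η ^ 2 * ‖g' (w t)‖ ^ 2 := by
      have : w (t + 1) - wstar = (w t - wstar) - η • g' (w t) := by
        rw [hupdate t]; abel
      simp only [hr, this]
      rw [norm_sub_sq_real, real_inner_smul_right, real_inner_comm, norm_smul, mul_pow]
      simp only [Real.norm_eq_abs, sq_abs]
      ring
    have hgn : ‖g' (w t)‖ ^ 2 ≤ L ^ 2 := by
      have := hLip (w t)
      nlinarith [norm_nonneg (g' (w t))]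
    have h2η : 0 < 2 * η := by linarith
    rw [ge_iff_le] at hq
    rw [div_add' _ _ _ h2η.ne', le_div_iff₀ h2η]
    nlinarith
  have hsum : ∑ t ∈ Finset.Icc 1 T, (q * (g (w t) - g wstar)) ≤
      (r 1 - r (T + 1)) / (2 * η) + T * (η * L ^ 2 / 2) := by
    calc ∑ t ∈ Finset.Icc 1 T, (q * (g (w t) - g wstar))
        ≤ ∑ t ∈ Finset.Icc 1 T, ((r t - r (t + 1)) / (2 * η) + η * L ^ 2 / 2) :=
          Finset.sum_le_sum fun t _ => hstep t
      _ = (∑ t ∈ Finset.Icc 1 T, (r t - r (t + 1))) / (2 * η) + T * (η * L ^ 2 / 2) := by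
          rw [Finset.sum_add_distrib, ← Finset.sum_div, Finset.sum_const, Nat.card_Icc]
          simp [nsmul_eq_mul]
      _ = (r 1 - r (T + 1)) / (2 * η) + T * (η * L ^ 2 / 2) := by
          congr 1
          rw [← Finset.Ico_add_one_right_eq_Icc, Finset.sum_Ico_eq_sum_range, Nat.add_sub_cancel, Nat.add_comm T 1]
          congr 1
          exact Finset.sum_range_sub' (fun i => r (1 + i)) T
      _ = _ := rfl
  have hr1 : r 1 ≤ D ^ 2 := by
    simpa [hr] using pow_le_pow_left₀ (norm_nonneg _) hinit 2
  have hrT : 0 ≤ r (T + 1) := sq_nonneg _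
  have hTpos : (0 : ℝ) < T := by exact_mod_cast hT
  have hqsum : q * ∑ t ∈ Finset.Icc 1 T, (g (w t) - g wstar) ≤
      D ^ 2 / (2 * η) + T * (η * L ^ 2 / 2) := by
    rw [Finset.mul_sum]
    refine hsum.trans ?_
    have : (r 1 - r (T + 1)) / (2 * η) ≤ D ^ 2 / (2 * η) := by
      apply div_le_div_of_nonneg_right _ (by linarith)
      linarith
    linarith
  have hqT : (0 : ℝ) < q * T := by positivity
  have e1 : (1 / (T : ℝ)) * ∑ t ∈ Finset.Icc 1 T, (g (w t) - g wstar) =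
      (q * ∑ t ∈ Finset.Icc 1 T, (g (w t) - g wstar)) / (q * T) := by
    field_simp
  have e2 : D ^ 2 / (2 * η * q * T) + η * L ^ 2 / (2 * q) =
      (D ^ 2 / (2 * η) + T * (η * L ^ 2 / 2)) / (q * T) := by
    field_simp
  rw [e1, e2]
  gcongr
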